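/- Let μ : A* → A* be a substitution, u a two-sided periodic point of μ with growing seed b|a and period p, and r ∈ {0,...,p-1}. Fix j ∈ {0,...,p-1} and a letter c ∈ E_j. If there exists a b-admissible sequence ((m_i,a_i))_{i=0,...,k-1} with k ≡ j (mod p), c the last letter of m_0, and μ^{k-1}(m_{k-1})···μ^0(m_0)·a_0 ≠ μ^k(b), then there exists such a b-admissible sequence additionally satisfying either k < p or μ^{p-1}(m_{k-1})···μ^0(m_{k-p})·a_{k-p} ≠ μ^p(b). -/
import Mathlib


/-- `substApp μ n w` is `μ^n(w)`: the `n`-fold application of the substitution `μ`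
(extended to words by concatenation) to the word `w`. -/
def substApp {A : Type*} (μ : A → List A) (n : ℕ) (w : List A) : List A :=
  (fun v => v.flatMap μ)^[n] w


lemma substApp_append {A : Type*} (μ : A → List A) (n : ℕ) (w₁ w₂ : List A) :
    substApp μ n (w₁ ++ w₂) = substApp μ n w₁ ++ substApp μ n w₂ := by
  induction n generalizing w₁ w₂ with
  | zero => rfl
  | succ n ih =>
    simp only [substApp, Function.iterate_succ_apply] at *
    rw [List.flatMap_append]
    exact ih _ _

lemma substApp_nil {A : Type*} (μ : A → List A) (n : ℕ) : substApp μ n [] = [] := by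
  induction n with
  | zero => rfl
  | succ n ih => simpa [substApp, Function.iterate_succ_apply] using ih

lemma substApp_add {A : Type*} (μ : A → List A) (m n : ℕ) (w : List A) :
    substApp μ (m + n) w = substApp μ m (substApp μ n w) :=
  Function.iterate_add_apply _ m n w

lemma substApp_flatten {A : Type*} (μ : A → List A) (n : ℕ) (L : List (List A)) :
    substApp μ n L.flatten = (L.map (substApp μ n)).flatten := by
  induction L with
  | nil => simp [substApp_nil]
  | cons h t ih => simp [substApp_append, ih]

lemma reverse_ofFn {α : Type*} {n : ℕ} (f : Fin n → α) :
    (List.ofFn f).reverse = List.ofFn (fun i => f i.rev) := by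
  apply List.ext_getElem
  · simp
  · intro i h1 h2
    simp only [List.getElem_reverse, List.getElem_ofFn]
    congr 1
    simp only [List.length_reverse, List.length_ofFn] at h1
    ext
    simp [Fin.rev]
    omega

/-- A sequence `((m_i, a_i))_{i=0,...,k-1}` is admissible with respect to `μ` if
`m_{i-1} a_{i-1}` is a prefix of `μ(a_i)` for every `1 ≤ i ≤ k-1`. -/
def Admissible {A : Type*} (μ : A → List A) (k : ℕ) (s : Fin k → List A × A) : Prop :=
  ∀ i : Fin k, 0 < i.val →
    ((s ⟨i.val - 1, by have := i.isLt; omega⟩).1 ++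
      [(s ⟨i.val - 1, by have := i.isLt; omega⟩).2]) <+: μ (s i).2

/-- A sequence `((m_i, a_i))_{i=0,...,k-1}` is `a`-admissible with respect to `μ`
if it is admissible and moreover `m_{k-1} a_{k-1}` is a prefix of `μ(a)`. -/
def LetterAdmissible {A : Type*} (μ : A → List A) (a : A) (k : ℕ)
    (s : Fin k → List A × A) : Prop :=
  Admissible μ k s ∧ ∀ h : 0 < k,
    ((s ⟨k - 1, by omega⟩).1 ++ [(s ⟨k - 1, by omega⟩).2]) <+: μ a

/-- The word `μ^{k-1}(m_{k-1}) · μ^{k-2}(m_{k-2}) ⋯ μ^0(m_0)` associated with a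
sequence `((m_i, a_i))_{i=0,...,k-1}`. -/
def dtProd {A : Type*} (μ : A → List A) (k : ℕ) (s : Fin k → List A × A) : List A :=
  ((List.ofFn fun i : Fin k => substApp μ i.val (s i).1)).reverse.flatten


lemma dtProd_split {A : Type*} (μ : A → List A) (n q : ℕ) (s : Fin (n + q) → List A × A) :
    dtProd μ (n + q) s =
      substApp μ n (List.ofFn fun t : Fin q =>
        substApp μ (q - 1 - t.val) (s ⟨n + q - 1 - t.val, by omega⟩).1).flatten
      ++ dtProd μ n (fun i => s ⟨i.val, by omega⟩) := by
  unfold dtProd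
  rw [List.ofFn_add, List.reverse_append, List.flatten_append, substApp_flatten,
    List.map_ofFn, reverse_ofFn]
  congr 1
  · refine congrArg List.flatten (congrArg List.ofFn (funext fun t => ?_))
    have ht := t.isLt
    have h3 : Fin.natAdd n t.rev = (⟨n + q - 1 - t.val, by omega⟩ : Fin (n + q)) := by
      ext; simp [Fin.rev]; omega
    simp only [Function.comp, h3, Fin.val_mk]
    rw [← substApp_add]
    congr 1
    omega

/-- Lemma 3.7 (first part): in the setting of a substitution `μ` with a two-sided
periodic point of period `p` and growing seed `b|a` (encoded by: `a` and `b` are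
growing, `μ^p(b)` ends with `b` and `μ^p(a)` starts with `a`), if there is a
`b`-admissible sequence of length `k ≡ j (mod p)` whose word `m_0` ends with the
letter `c` and with `μ^{k-1}(m_{k-1}) ⋯ μ^0(m_0) · a_0 ≠ μ^k(b)`, then there is
such a sequence additionally satisfying `k' < p` or
`μ^{p-1}(m_{k'-1}) ⋯ μ^0(m_{k'-p}) · a_{k'-p} ≠ μ^p(b)`. -/
theorem stmt11 {A : Type*} (μ : A → List A) (hne : ∀ c, μ c ≠ [])
    (a b : A) (p : ℕ) (hp : 1 ≤ p)
    (hgrowa : ∀ N : ℕ, ∃ n, N ≤ (substApp μ n [a]).length)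
    (hgrowb : ∀ N : ℕ, ∃ n, N ≤ (substApp μ n [b]).length)
    (hseedb : [b] <:+ substApp μ p [b])
    (hseeda : [a] <+: substApp μ p [a])
    (r j : ℕ) (hr : r < p) (hj : j < p) (c : A)
    (k : ℕ) (s : Fin k → List A × A)
    (hk1 : 1 ≤ k) (hkj : k % p = j % p)
    (hadm : LetterAdmissible μ b k s)
    (hlast : (s ⟨0, hk1⟩).1.getLast? = some c)
    (hneq : dtProd μ k s ++ [(s ⟨0, hk1⟩).2] ≠ substApp μ k [b]) :
    ∃ (k' : ℕ) (s' : Fin k' → List A × A) (hk1' : 1 ≤ k'),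
      k' % p = j % p ∧ LetterAdmissible μ b k' s' ∧
      (s' ⟨0, hk1'⟩).1.getLast? = some c ∧
      dtProd μ k' s' ++ [(s' ⟨0, hk1'⟩).2] ≠ substApp μ k' [b] ∧
      (k' < p ∨ ∀ h : p ≤ k',
        (List.ofFn (fun t : Fin p =>
            substApp μ (p - 1 - t.val)
              (s' ⟨k' - 1 - t.val, by have := t.isLt; omega⟩).1)).flatten
          ++ [(s' ⟨k' - p, by omega⟩).2] ≠ substApp μ p [b]) := by

  induction k using Nat.strong_induction_on with
  | _ k IH =>
  by_cases hkp : k < p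
  · exact ⟨k, s, hk1, hkj, hadm, hlast, hneq, Or.inl hkp⟩
  push_neg at hkp
  obtain ⟨n, rfl⟩ : ∃ n, k = n + p := ⟨k - p, by omega⟩
  by_cases hW : (List.ofFn (fun t : Fin p =>
      substApp μ (p - 1 - t.val)
        (s ⟨n + p - 1 - t.val, by have := t.isLt; omega⟩).1)).flatten
      ++ [(s ⟨n + p - p, by omega⟩).2] = substApp μ p [b]
  · -- the top p-block equals μ^p(b); truncate and use the IH
    obtain ⟨t0, ht0⟩ := hseedb
    have hxb : (s ⟨n + p - p, by omega⟩).2 = b := by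
      have h := congrArg List.getLast? hW
      rw [← ht0] at h
      simpa [List.getLast?_concat] using h
    have hsplit := dtProd_split μ n p s
    rcases Nat.eq_zero_or_pos n with hn0 | hn1
    · -- n = 0 : direct contradiction with hneq
      subst hn0
      exfalso
      apply hneq
      have hdt0 : dtProd μ 0 (fun i : Fin 0 => s ⟨i.val, by omega⟩) = [] := rfl
      have h0 : (⟨0 + p - p, by omega⟩ : Fin (0 + p)) = ⟨0, hk1⟩ := by simp only [Fin.mk.injEq]; omega
      rw [hsplit, hdt0, List.append_nil]
      show substApp μ 0 _ ++ _ = _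
      rw [show substApp μ (0 + p) [b] = substApp μ p [b] by norm_num]
      rw [← hW, h0]
      rfl
    · -- n ≥ 1 : truncate the sequence to length n
      set s' : Fin n → List A × A := fun i => s ⟨i.val, by have := i.isLt; omega⟩ with hs'
      have hkj' : n % p = j % p := by rwa [Nat.add_mod_right] at hkj
      have hadm' : LetterAdmissible μ b n s' := by
        constructor
        · intro i hi
          exact hadm.1 ⟨i.val, by have := i.isLt; omega⟩ hi
        · intro _
          have hb : (s ⟨n, by omega⟩).2 = b := by
            have : (⟨n, by omega⟩ : Fin (n + p)) = ⟨n + p - p, by omega⟩ := by simp only [Fin.mk.injEq]; omega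
            rw [this, hxb]
          have := hadm.1 ⟨n, by omega⟩ hn1
          rw [hb] at this
          exact this
      have hlast' : (s' ⟨0, hn1⟩).1.getLast? = some c := hlast
      have hneq' : dtProd μ n s' ++ [(s' ⟨0, hn1⟩).2] ≠ substApp μ n [b] := by
        intro hEq
        apply hneq
        calc dtProd μ (n + p) s ++ [(s ⟨0, hk1⟩).2]
            = substApp μ n (List.ofFn fun t : Fin p =>
                substApp μ (p - 1 - t.val)
                  (s ⟨n + p - 1 - t.val, by have := t.isLt; omega⟩).1).flatten
              ++ (dtProd μ n s' ++ [(s' ⟨0, hn1⟩).2]) := by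
              rw [hsplit, List.append_assoc]
          _ = substApp μ n ((List.ofFn fun t : Fin p =>
                substApp μ (p - 1 - t.val)
                  (s ⟨n + p - 1 - t.val, by have := t.isLt; omega⟩).1).flatten ++ [b]) := by
              rw [hEq, substApp_append]
          _ = substApp μ n (substApp μ p [b]) := by rw [← hW, hxb]
          _ = substApp μ (n + p) [b] := (substApp_add μ n p [b]).symm
      exact IH n (by omega) s' hn1 hkj' hadm' hlast' hneq'
  · exact ⟨n + p, s, hk1, hkj, hadm, hlast, hneq, Or.inr fun _ => hW⟩
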